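/- Let T be a finite edge-weighted tree with at least two vertices, rooted at the homebase r, with invoking cost q ≥ 0, and let S be a cost-optimal exploration strategy for T. Then for every vertex v ≠ r, if a walk of S visits at least one vertex of the subtree T_v and afterwards visits a vertex outside T_v, then that walk visits every vertex of T_v; that is, if an agent leaves a subtree, it has explored the subtree on its own. -/

import Mathlib

open SimpleGraph

/-- An exploration strategy on a graph `G` from homebase `h`: a nonempty finite
family of walks, each starting at `h`, that together visit every vertex. -/
structure ExplStrategy {V : Type*} (G : SimpleGraph V) (h : V) where
  k : ℕ
  kpos : 0 < k
  ends : Fin k → V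
  walks : (i : Fin k) → G.Walk h (ends i)
  covers : ∀ v : V, ∃ i, v ∈ (walks i).support

/-- The weight of a walk: the sum of the weights of its edges, with multiplicity. -/
def walkWeight {V : Type*} {G : SimpleGraph V} (w : Sym2 V → ℝ) {a b : V}
    (p : G.Walk a b) : ℝ := (p.edges.map w).sum

/-- Cost of a strategy: `k·q` plus the total distance traversed. -/
noncomputable def stratCost {V : Type*} {G : SimpleGraph V} {h : V}
    (w : Sym2 V → ℝ) (q : ℝ) (S : ExplStrategy G h) : ℝ :=
  (S.k : ℝ) * q + ∑ i, walkWeight w (S.walks i)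

/-- A strategy is cost-optimal if no exploration strategy has strictly smaller cost. -/
def IsOptimal {V : Type*} {G : SimpleGraph V} {h : V} (w : Sym2 V → ℝ) (q : ℝ)
    (S : ExplStrategy G h) : Prop :=
  ∀ S' : ExplStrategy G h, stratCost w q S ≤ stratCost w q S'

/-- Weighted distance between two vertices: infimum of weights of connecting walks. -/
noncomputable def wdist {V : Type*} (G : SimpleGraph V) (w : Sym2 V → ℝ) (u x : V) : ℝ :=
  sInf {c : ℝ | ∃ p : G.Walk u x, walkWeight w p = c}

/-- `u` belongs to the subtree `T_v` of the tree `G` rooted at `r`: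
`v` lies on every (equivalently, in a tree, the unique) path from `r` to `u`. -/
def InSubtree {V : Type*} (G : SimpleGraph V) (r v u : V) : Prop :=
  ∀ p : G.Path r u, v ∈ p.1.support

/-- `x` is a leaf of the tree `G` rooted at `r`: a vertex of degree 1 different
from the root. -/
def IsTLeaf {V : Type*} (G : SimpleGraph V) (r x : V) : Prop :=
  x ≠ r ∧ ∃! y, G.Adj x y

/-- `u` is a child of `v` in the tree `G` rooted at `r`. -/
def IsTChild {V : Type*} (G : SimpleGraph V) (r v u : V) : Prop :=
  G.Adj v u ∧ InSubtree G r v u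

open scoped Classical in
/-- Total edge weight of the graph `G`. -/
noncomputable def totalWeight {V : Type*} [Fintype V] (G : SimpleGraph V)
    (w : Sym2 V → ℝ) : ℝ :=
  ∑ e : Sym2 V, if e ∈ G.edgeSet then w e else 0


section Aux
variable {V : Type*} [DecidableEq V] {G : SimpleGraph V}

lemma walkWeight_append' (w : Sym2 V → ℝ) {x y z : V} (p : G.Walk x y) (q : G.Walk y z) :
    walkWeight w (p.append q) = walkWeight w p + walkWeight w q := by
  simp [walkWeight, Walk.edges_append]

lemma walkWeight_cons' (w : Sym2 V → ℝ) {x y z : V} (h : G.Adj x y) (p : G.Walk y z) :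
    walkWeight w (Walk.cons h p) = w s(x, y) + walkWeight w p := by
  simp [walkWeight]

lemma walkWeight_concat' (w : Sym2 V → ℝ) {x y z : V} (p : G.Walk x y) (h : G.Adj y z) :
    walkWeight w (p.concat h) = walkWeight w p + w s(y, z) := by
  simp [walkWeight, Walk.edges_concat]

lemma mem_of_inSubtree' {r v u : V} (h : InSubtree G r v u) (W : G.Walk r u) :
    v ∈ W.support :=
  W.support_bypass_subset (h ⟨W.bypass, W.bypass_isPath⟩)

lemma not_inSubtree' {r v u : V} (W : G.Walk r u) (hW : v ∉ W.support) :
    ¬ InSubtree G r v u :=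
  fun h => hW (mem_of_inSubtree' h W)

lemma boundary_eq {r v x y : V} (hx : InSubtree G r v x) (hy : ¬ InSubtree G r v y)
    (hadj : G.Adj y x) : x = v := by
  rw [InSubtree] at hy; push_neg at hy
  obtain ⟨P, hP⟩ := hy
  by_cases hxP : x ∈ P.1.support
  · exact absurd (P.1.support_takeUntil_subset hxP (hx ⟨P.1.takeUntil x hxP, P.2.takeUntil hxP⟩)) hP
  · have hQ : (P.1.concat hadj).IsPath := by
      rw [← Walk.isPath_reverse_iff, Walk.reverse_concat]
      exact (Walk.isPath_reverse_iff _).2 P.2 |>.cons (by simpa using hxP)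
    have := hx ⟨P.1.concat hadj, hQ⟩
    rw [Walk.support_concat, List.mem_append] at this
    rcases this with h | h
    · exact absurd h hP
    · simp at h; exact h.symm

lemma parent_unique' (hG : G.IsAcyclic) {r v y₁ y₂ : V}
    (h1 : ¬ InSubtree G r v y₁) (h2 : ¬ InSubtree G r v y₂)
    (ha1 : G.Adj y₁ v) (ha2 : G.Adj y₂ v) : y₁ = y₂ := by
  rw [InSubtree] at h1 h2; push_neg at h1 h2
  obtain ⟨P₁, hP₁⟩ := h1
  obtain ⟨P₂, hP₂⟩ := h2
  have hQ1 : (P₁.1.concat ha1).IsPath := by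
    rw [← Walk.isPath_reverse_iff, Walk.reverse_concat]
    exact (Walk.isPath_reverse_iff _).2 P₁.2 |>.cons (by simpa using hP₁)
  have hQ2 : (P₂.1.concat ha2).IsPath := by
    rw [← Walk.isPath_reverse_iff, Walk.reverse_concat]
    exact (Walk.isPath_reverse_iff _).2 P₂.2 |>.cons (by simpa using hP₂)
  have := hG.path_unique ⟨P₁.1.concat ha1, hQ1⟩ ⟨P₂.1.concat ha2, hQ2⟩
  have hsup : (P₁.1.concat ha1).support = (P₂.1.concat ha2).support :=
    congrArg (fun (P : G.Path r v) => P.1.support) this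
  rw [Walk.support_concat, Walk.support_concat] at hsup
  have hss : P₁.1.support = P₂.1.support := by
    simpa [List.concat_eq_append] using hsup
  have g1 := P₁.1.getLast_support
  have g2 := P₂.1.getLast_support
  rw [← g1, ← g2]
  congr 1

lemma darts_decomp {x y : V} (W : G.Walk x y) (d : G.Dart) (hd : d ∈ W.darts) :
    ∃ (W₁ : G.Walk x d.fst) (W₂ : G.Walk d.snd y),
      W = W₁.append (Walk.cons d.adj W₂) := by
  induction W with
  | nil => simp at hd
  | cons h p ih =>
    rw [Walk.darts_cons, List.mem_cons] at hd
    rcases hd with hd | hd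
    · subst hd
      exact ⟨Walk.nil, p, rfl⟩
    · obtain ⟨W₁, W₂, hW⟩ := ih hd
      exact ⟨Walk.cons h W₁, W₂, by rw [hW, Walk.cons_append]⟩

lemma discrete_ivt (P : ℕ → Prop) {i j : ℕ} (hij : i ≤ j) (hi : P i) (hj : ¬ P j) :
    ∃ m, i ≤ m ∧ m < j ∧ P m ∧ ¬ P (m + 1) := by
  classical
  have hii : (fun n => i ≤ n ∧ P n) i := ⟨le_refl i, hi⟩
  set m := Nat.findGreatest (fun n => i ≤ n ∧ P n) j with hm
  have him : i ≤ m := Nat.le_findGreatest hij hii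
  have hmj : m ≤ j := Nat.findGreatest_le j
  have hPm : P m := by
    have h2 : (fun n => i ≤ n ∧ P n) (Nat.findGreatest (fun n => i ≤ n ∧ P n) j) :=
      Nat.findGreatest_spec (P := fun n => i ≤ n ∧ P n) hij hii
    exact (hm ▸ h2).2
  have hmltj : m < j := lt_of_le_of_ne hmj (fun h => hj (h ▸ hPm))
  refine ⟨m, him, hmltj, hPm, fun hP1 => ?_⟩
  have hsucc : (fun n => i ≤ n ∧ P n) (m + 1) := ⟨by omega, hP1⟩
  have : m + 1 ≤ m := Nat.le_findGreatest (by omega) hsucc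
  omega

end Aux


/-- In every cost-optimal exploration strategy of an edge-weighted tree with at least
two vertices, if a walk visits a vertex of the subtree `T_v` (`v ≠ r`) and afterwards
visits a vertex outside `T_v`, then that walk visits every vertex of `T_v`:
an agent leaving a subtree has explored it on its own. -/
theorem leaving_agent_explored_subtree {V : Type*} [Fintype V]
    (G : SimpleGraph V) (hG : G.IsTree) (hcard : 1 < Fintype.card V)
    (r : V) (w : Sym2 V → ℝ) (hw : ∀ e ∈ G.edgeSet, 0 < w e)
    (q : ℝ) (hq : 0 ≤ q)
    (S : ExplStrategy G r) (hS : IsOptimal w q S)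
    (v : V) (hv : v ≠ r) (a : Fin S.k)
    (hleave : ∃ i j : ℕ, i < j ∧ j < (S.walks a).support.length ∧
        InSubtree G r v ((S.walks a).support.getD i r) ∧
        ¬ InSubtree G r v ((S.walks a).support.getD j r)) :
    ∀ u, InSubtree G r v u → u ∈ (S.walks a).support := by
  classical
  by_contra hcon
  push_neg at hcon
  obtain ⟨u, hu, hum⟩ := hcon
  obtain ⟨i, j, hij, hjlen, hPi, hPj⟩ := hleave
  obtain ⟨m, him, hmj, hPm, hPm1⟩ :=
    discrete_ivt (fun n => InSubtree G r v ((S.walks a).support.getD n r)) hij.le hPi hPj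
  have hlen := (S.walks a).length_support
  have hm1len : m + 1 < (S.walks a).support.length := by omega
  have hmd : m < (S.walks a).darts.length := by
    rw [Walk.length_darts]; omega
  set d := (S.walks a).darts[m]'hmd with hd
  have hdfst : d.fst = (S.walks a).support.getD m r := by
    have h1 := (S.walks a).map_fst_darts
    calc d.fst = ((S.walks a).darts.map (·.fst)).getD m r := by
          rw [List.getD_eq_getElem _ _ (by simpa using hmd)]
          simp [hd]
      _ = ((S.walks a).support.dropLast).getD m r := by rw [h1]
      _ = (S.walks a).support.getD m r := by
          rw [List.getD_eq_getElem _ _ (by rw [List.length_dropLast]; omega),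
            List.getD_eq_getElem _ _ (by omega), List.getElem_dropLast]
  have hdsnd : d.snd = (S.walks a).support.getD (m + 1) r := by
    have h1 := (S.walks a).map_snd_darts
    calc d.snd = ((S.walks a).darts.map (·.snd)).getD m r := by
          rw [List.getD_eq_getElem _ _ (by simpa using hmd)]
          simp [hd]
      _ = ((S.walks a).support.tail).getD m r := by rw [h1]
      _ = (S.walks a).support.getD (m + 1) r := by
          rw [List.getD_eq_getElem _ _ (by rw [List.length_tail]; omega),
            List.getD_eq_getElem _ _ (by omega), List.getElem_tail]
  have hPfst : InSubtree G r v d.fst := by rw [hdfst]; exact hPm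
  have hPsnd : ¬ InSubtree G r v d.snd := by rw [hdsnd]; exact hPm1
  have hdv : d.fst = v := boundary_eq hPfst hPsnd d.adj.symm
  subst hdv
  have hdmem : d ∈ (S.walks a).darts := by rw [hd]; exact List.getElem_mem _
  obtain ⟨W₁, W₂, hWdec⟩ := darts_decomp (S.walks a) d hdmem
  have hvW₁ : d.fst ∈ W₁.support := Walk.end_mem_support _
  set A := W₁.takeUntil d.fst hvW₁ with hAdef
  set I := W₁.dropUntil d.fst hvW₁ with hIdef
  have hAI : A.append I = W₁ := W₁.take_spec hvW₁
  have hArev : ¬ A.reverse.Nil := Walk.not_nil_of_ne hv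
  obtain ⟨z, hzadj, W', hA'⟩ := Walk.not_nil_iff.mp hArev
  have hA : A = W'.reverse.concat hzadj.symm := by
    have h2 := congrArg Walk.reverse hA'
    rw [Walk.reverse_reverse] at h2
    rw [h2, Walk.reverse_cons]
    rfl
  set Am := W'.reverse with hAmdef
  have hcount := W₁.count_support_takeUntil_eq_one hvW₁
  have hvAm : d.fst ∉ Am.support := by
    intro hmem
    rw [← hAdef] at hcount
    rw [hA, Walk.support_concat, List.count_append] at hcount
    have h1 : 0 < Am.support.count (d.fst) := List.count_pos_iff.mpr hmem
    simp at hcount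
    omega
  have hz : ¬ InSubtree G r d.fst z := not_inSubtree' Am hvAm
  have hzp : z = d.snd := parent_unique' hG.2 hz hPsnd hzadj.symm d.adj.symm
  subst hzp
  obtain ⟨c, hcov⟩ := S.covers u
  have hca : c ≠ a := fun h => hum (h ▸ hcov)
  have hvb : d.fst ∈ (S.walks c).support :=
    (S.walks c).support_takeUntil_subset hcov
      (mem_of_inSubtree' hu ((S.walks c).takeUntil u hcov))
  set bt := (S.walks c).takeUntil d.fst hvb with hbtdef
  set bd := (S.walks c).dropUntil d.fst hvb with hbddef
  have hb : bt.append bd = S.walks c := (S.walks c).take_spec hvb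
  set a' : G.Walk r (S.ends a) := Am.append W₂ with ha'
  set b' : G.Walk r (S.ends c) := bt.append (I.append bd) with hb'
  set wks : (i' : Fin S.k) → G.Walk r (S.ends i') :=
    Function.update (Function.update S.walks a a') c b' with hwks
  have hwa : wks a = a' := by
    rw [hwks, Function.update_of_ne (Ne.symm hca), Function.update_self]
  have hwc : wks c = b' := by rw [hwks, Function.update_self]
  have hwi : ∀ i', i' ≠ a → i' ≠ c → wks i' = S.walks i' := fun i' h1 h2 => by
    rw [hwks, Function.update_of_ne h2, Function.update_of_ne h1]
  have hcov' : ∀ z', ∃ i', z' ∈ (wks i').support := by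
    intro z'
    obtain ⟨i', hi'⟩ := S.covers z'
    by_cases h1 : i' = c
    · subst h1
      refine ⟨i', ?_⟩
      rw [hwc, hb']
      rw [← hb, Walk.mem_support_append_iff] at hi'
      rw [Walk.mem_support_append_iff, Walk.mem_support_append_iff]
      tauto
    by_cases h2 : i' = a
    · subst h2
      rw [hWdec, ← hAI, hA] at hi'
      simp only [Walk.mem_support_append_iff, Walk.support_concat, List.concat_eq_append,
        List.mem_append, Walk.support_cons, List.mem_cons, List.mem_singleton,
        List.not_mem_nil, or_false] at hi'
      rcases hi' with ((hAm' | hfst) | hI') | (hfst2 | hW₂')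
      · exact ⟨i', by rw [hwa, ha', Walk.mem_support_append_iff]; left; exact hAm'⟩
      · refine ⟨c, ?_⟩
        rw [hwc, hb', Walk.mem_support_append_iff, Walk.mem_support_append_iff]
        right; left; rw [hfst]; exact Walk.start_mem_support _
      · exact ⟨c, by
          rw [hwc, hb', Walk.mem_support_append_iff, Walk.mem_support_append_iff]
          right; left; exact hI'⟩
      · refine ⟨c, ?_⟩
        rw [hwc, hb', Walk.mem_support_append_iff, Walk.mem_support_append_iff]
        right; left; rw [hfst2]; exact Walk.start_mem_support _
      · exact ⟨i', by rw [hwa, ha', Walk.mem_support_append_iff]; right; exact hW₂'⟩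
    · exact ⟨i', by rw [hwi i' h2 h1]; exact hi'⟩
  set S' : ExplStrategy G r := ⟨S.k, S.kpos, S.ends, wks, hcov'⟩ with hS'def
  have hle := hS S'
  have hwW : walkWeight w (S.walks a)
      = walkWeight w Am + w s(d.snd, d.fst) + walkWeight w I
        + (w s(d.fst, d.snd) + walkWeight w W₂) := by
    rw [hWdec, ← hAI, hA, walkWeight_append', walkWeight_append', walkWeight_concat',
      walkWeight_cons']
  have hwb : walkWeight w (S.walks c) = walkWeight w bt + walkWeight w bd := by
    rw [← hb, walkWeight_append']
  have hwa' : walkWeight w a' = walkWeight w Am + walkWeight w W₂ := by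
    rw [ha', walkWeight_append']
  have hwb' : walkWeight w b'
      = walkWeight w bt + (walkWeight w I + walkWeight w bd) := by
    rw [hb', walkWeight_append', walkWeight_append']
  have hsym : s(d.snd, d.fst) = s(d.fst, d.snd) := Sym2.eq_swap
  have hpos : 0 < w s(d.fst, d.snd) := hw _ ((SimpleGraph.mem_edgeSet G).2 d.adj)
  have hupd : ∀ i', walkWeight w (wks i') =
      Function.update (Function.update (fun i'' => walkWeight w (S.walks i'')) a
        (walkWeight w a')) c (walkWeight w b') i' := by
    intro i'
    by_cases h1 : i' = c
    · subst h1; rw [hwc, Function.update_self]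
    by_cases h2 : i' = a
    · subst h2
      rw [hwa, Function.update_of_ne (Ne.symm hca), Function.update_self]
    · rw [hwi i' h2 h1, Function.update_of_ne h1, Function.update_of_ne h2]
  have hamem : a ∈ Finset.univ \ {c} := by simp [Ne.symm hca]
  have hsum : ∑ i', walkWeight w (wks i')
      = (∑ i', walkWeight w (S.walks i')) - 2 * w s(d.fst, d.snd) := by
    rw [Finset.sum_congr rfl (fun i' _ => hupd i'),
      Finset.sum_update_of_mem (Finset.mem_univ c),
      Finset.sum_update_of_mem hamem,
      Finset.sum_eq_sum_sdiff_singleton_add (Finset.mem_univ c)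
        (fun i'' => walkWeight w (S.walks i'')),
      Finset.sum_eq_sum_sdiff_singleton_add hamem
        (fun i'' => walkWeight w (S.walks i''))]
    rw [hwW, hwb, hwa', hwb', hsym]
    ring
  have hc1 : stratCost w q S' = (S.k : ℝ) * q + ∑ i', walkWeight w (wks i') := rfl
  have hc2 : stratCost w q S = (S.k : ℝ) * q + ∑ i', walkWeight w (S.walks i') := rfl
  rw [hc1, hc2, hsum] at hle
  linarith
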